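/- Let f : ℝ → ℝ be n-times differentiable. Then for every real x, dⁿ/dxⁿ [f(x³)] = n! · Σ_{k=0}^{⌊n/3⌋} Σ_{m=0}^{⌊(n−3k)/2⌋} 3^{n−3k−m} · x^{2n−6k−3m} / ((n−3k−2m)! k! m!) · f^{(n−2k−m)}(x³). -/

import Mathlib

open Finset

def Acube (n : ℕ) : Finset (ℕ × ℕ × ℕ) :=
  ((range (n+1)) ×ˢ (range (n+1)) ×ˢ (range (n+1))).filter
    (fun p => p.1 + 2*p.2.1 + 3*p.2.2 = n)

lemma mem_Acube {n : ℕ} {p : ℕ × ℕ × ℕ} :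
    p ∈ Acube n ↔ p.1 + 2*p.2.1 + 3*p.2.2 = n := by
  simp only [Acube, mem_filter, mem_product, mem_range]
  omega

noncomputable def Tc (f : ℝ → ℝ) (n : ℕ) (p : ℕ × ℕ × ℕ) (x : ℝ) : ℝ :=
  (n.factorial : ℝ) / (p.1.factorial * p.2.1.factorial * p.2.2.factorial) *
    3^(p.1+p.2.1) * x^(2*p.1+p.2.1) * iteratedDeriv (p.1+p.2.1+p.2.2) f (x^3)

noncomputable def Uc (f : ℝ → ℝ) (n : ℕ) (x : ℝ) (g : ℕ × ℕ × ℕ → ℕ) (q : ℕ × ℕ × ℕ) : ℝ :=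
  (n.factorial : ℝ) * (g q) / (q.1.factorial * q.2.1.factorial * q.2.2.factorial) *
    3^(q.1+q.2.1) * x^(2*q.1+q.2.1) * iteratedDeriv (q.1+q.2.1+q.2.2) f (x^3)

lemma Tc_split (f : ℝ → ℝ) (n : ℕ) (x : ℝ) (q : ℕ × ℕ × ℕ) (hq : q ∈ Acube (n+1)) :
    Tc f (n+1) q x = Uc f n x (fun q => q.1) q + Uc f n x (fun q => 2*q.2.1) q
      + Uc f n x (fun q => 3*q.2.2) q := by
  have h := mem_Acube.mp hq
  obtain ⟨a, b, c⟩ := q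
  simp only at h
  simp only [Tc, Uc]
  have hfac : ((n+1).factorial : ℝ) = (n.factorial : ℝ) * (a + 2*b + 3*c) := by
    rw [Nat.factorial_succ, ← h]; push_cast; ring
  rw [hfac]
  push_cast
  ring

lemma deriv_term (c : ℝ) (e : ℕ) (F : ℝ → ℝ) (hF : Differentiable ℝ F) (x : ℝ) :
    deriv (fun y => c * y^e * F (y^3)) x
      = c * e * x^(e-1) * F (x^3) + c * 3 * x^(e+2) * deriv F (x^3) := by
  have h1 : HasDerivAt (fun y : ℝ => y^3) (3 * x^2) x := by
    simpa using hasDerivAt_pow 3 x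
  have h2 : HasDerivAt (fun y : ℝ => F (y^3)) (deriv F (x^3) * (3 * x^2)) x :=
    ((hF (x^3)).hasDerivAt).comp x h1
  have h3 : HasDerivAt (fun y : ℝ => c * y^e) (c * (e * x^(e-1))) x :=
    (hasDerivAt_pow e x).const_mul c
  have := h3.mul h2
  rw [show (fun y => c * y^e * F (y^3)) = ((fun y => c * y ^ e) * fun y => F (y ^ 3)) from rfl, this.deriv]
  ring_nf

lemma E1 (f : ℝ → ℝ) (n : ℕ) (x : ℝ) :
    ∑ q ∈ Acube (n+1), Uc f n x (fun q => q.1) q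
      = ∑ p ∈ Acube n, (n.factorial : ℝ) /
          (p.1.factorial * p.2.1.factorial * p.2.2.factorial) * 3^(p.1+p.2.1) * 3 *
          x^(2*p.1+p.2.1+2) * iteratedDeriv (p.1+p.2.1+p.2.2+1) f (x^3) := by
  rw [← Finset.sum_filter_of_ne (p := fun q => 0 < q.1)
    (by intro q _ hne; by_contra h; simp only [not_lt, Nat.le_zero] at h
        apply hne; simp [Uc, h])]
  refine Finset.sum_nbij' (i := fun q => (q.1 - 1, q.2.1, q.2.2))
    (j := fun p => (p.1 + 1, p.2.1, p.2.2)) ?_ ?_ ?_ ?_ ?_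
  · intro q hq
    obtain ⟨a, b, c⟩ := q
    simp only [mem_filter, mem_Acube] at hq ⊢
    omega
  · intro p hp
    obtain ⟨a, b, c⟩ := p
    simp only [mem_filter, mem_Acube] at hp ⊢
    omega
  · intro q hq
    obtain ⟨a, b, c⟩ := q
    simp only [mem_filter, mem_Acube] at hq
    simp only [Prod.mk.injEq, and_true, true_and]
    omega
  · intro p _
    simp
  · intro q hq
    obtain ⟨a, b, c⟩ := q
    simp only [mem_filter, mem_Acube] at hq
    obtain ⟨a, rfl⟩ : ∃ a', a = a' + 1 := ⟨a - 1, by omega⟩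
    simp only [Uc, Nat.add_sub_cancel]
    rw [show a + 1 + b = (a + b) + 1 by ring, pow_succ,
        show 2*(a+1) + b = 2*a + b + 2 by ring,
        Nat.factorial_succ a,
        show a + b + 1 + c = a + b + c + 1 by ring]
    push_cast
    field_simp

lemma E2 (f : ℝ → ℝ) (n : ℕ) (x : ℝ) :
    ∑ q ∈ Acube (n+1), Uc f n x (fun q => 2*q.2.1) q
      = ∑ p ∈ Acube n, (n.factorial : ℝ) /
          (p.1.factorial * p.2.1.factorial * p.2.2.factorial) * 3^(p.1+p.2.1) * (2*p.1 : ℕ) *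
          x^(2*p.1+p.2.1-1) * iteratedDeriv (p.1+p.2.1+p.2.2) f (x^3) := by
  rw [← Finset.sum_filter_of_ne (p := fun q => 0 < q.2.1)
    (by intro q _ hne; by_contra h; simp only [not_lt, Nat.le_zero] at h
        apply hne; simp [Uc, h])]
  rw [← Finset.sum_filter_of_ne (s := Acube n) (p := fun p => 0 < p.1)
    (by intro p _ hne; by_contra h; simp only [not_lt, Nat.le_zero] at h
        apply hne; simp [h])]
  refine Finset.sum_nbij' (i := fun q => (q.1 + 1, q.2.1 - 1, q.2.2))
    (j := fun p => (p.1 - 1, p.2.1 + 1, p.2.2)) ?_ ?_ ?_ ?_ ?_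
  · intro q hq
    obtain ⟨a, b, c⟩ := q
    simp only [mem_filter, mem_Acube] at hq ⊢
    omega
  · intro p hp
    obtain ⟨a, b, c⟩ := p
    simp only [mem_filter, mem_Acube] at hp ⊢
    omega
  · intro q hq
    obtain ⟨a, b, c⟩ := q
    simp only [mem_filter, mem_Acube] at hq
    simp only [Prod.mk.injEq, and_true, true_and]
    omega
  · intro p hp
    obtain ⟨a, b, c⟩ := p
    simp only [mem_filter, mem_Acube] at hp
    simp only [Prod.mk.injEq, and_true, true_and]
    omega
  · intro q hq
    obtain ⟨a, b, c⟩ := q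
    simp only [mem_filter, mem_Acube] at hq
    obtain ⟨b, rfl⟩ : ∃ b', b = b' + 1 := ⟨b - 1, by omega⟩
    simp only [Uc, Nat.add_sub_cancel]
    rw [show a + (b + 1) = (a + 1) + b by ring,
        show 2*a + (b+1) = 2*(a+1) + b - 1 by omega,
        Nat.factorial_succ b, Nat.factorial_succ a]
    rw [show a + 1 + b + c = a + (b + 1) + c by ring] at *
    push_cast
    field_simp

lemma E3 (f : ℝ → ℝ) (n : ℕ) (x : ℝ) :
    ∑ q ∈ Acube (n+1), Uc f n x (fun q => 3*q.2.2) q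
      = ∑ p ∈ Acube n, (n.factorial : ℝ) /
          (p.1.factorial * p.2.1.factorial * p.2.2.factorial) * 3^(p.1+p.2.1) * (p.2.1 : ℝ) *
          x^(2*p.1+p.2.1-1) * iteratedDeriv (p.1+p.2.1+p.2.2) f (x^3) := by
  rw [← Finset.sum_filter_of_ne (p := fun q => 0 < q.2.2)
    (by intro q _ hne; by_contra h; simp only [not_lt, Nat.le_zero] at h
        apply hne; simp [Uc, h])]
  rw [← Finset.sum_filter_of_ne (s := Acube n) (p := fun p => 0 < p.2.1)
    (by intro p _ hne; by_contra h; simp only [not_lt, Nat.le_zero] at h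
        apply hne; simp [h])]
  refine Finset.sum_nbij' (i := fun q => (q.1, q.2.1 + 1, q.2.2 - 1))
    (j := fun p => (p.1, p.2.1 - 1, p.2.2 + 1)) ?_ ?_ ?_ ?_ ?_
  · intro q hq
    obtain ⟨a, b, c⟩ := q
    simp only [mem_filter, mem_Acube] at hq ⊢
    omega
  · intro p hp
    obtain ⟨a, b, c⟩ := p
    simp only [mem_filter, mem_Acube] at hp ⊢
    omega
  · intro q hq
    obtain ⟨a, b, c⟩ := q
    simp only [mem_filter, mem_Acube] at hq
    simp only [Prod.mk.injEq, and_true, true_and]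
    omega
  · intro p hp
    obtain ⟨a, b, c⟩ := p
    simp only [mem_filter, mem_Acube] at hp
    simp only [Prod.mk.injEq, and_true, true_and]
    omega
  · intro q hq
    obtain ⟨a, b, c⟩ := q
    simp only [mem_filter, mem_Acube] at hq
    obtain ⟨c, rfl⟩ : ∃ c', c = c' + 1 := ⟨c - 1, by omega⟩
    simp only [Uc, Nat.add_sub_cancel]
    rw [show 2*a + b = 2*a + (b+1) - 1 by omega,
        show a + b + (c + 1) = a + (b+1) + c by ring,
        Nat.factorial_succ b, Nat.factorial_succ c]
    push_cast
    field_simp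
    ring

lemma key (n : ℕ) (f : ℝ → ℝ) (hf : ContDiff ℝ n f) (x : ℝ) :
    iteratedDeriv n (fun t => f (t ^ 3)) x = ∑ p ∈ Acube n, Tc f n p x := by
  induction n generalizing x with
  | zero =>
      have hA : Acube 0 = {(0,0,0)} := by decide
      simp [hA, Tc]
  | succ n ih =>
      have hfn : ContDiff ℝ n f := hf.of_le (by exact_mod_cast n.le_succ)
      have hdiff : ∀ j : ℕ, j ≤ n → Differentiable ℝ (iteratedDeriv j f) := fun j hj =>
        hf.differentiable_iteratedDeriv j (by exact_mod_cast Nat.lt_succ_of_le hj)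
      have hj_le : ∀ p ∈ Acube n, p.1 + p.2.1 + p.2.2 ≤ n := fun p hp => by
        have := mem_Acube.mp hp; omega
      rw [iteratedDeriv_succ]
      have hg : iteratedDeriv n (fun t => f (t^3)) = fun y => ∑ p ∈ Acube n, Tc f n p y :=
        funext fun y => ih hfn y
      rw [hg]
      have hdA : ∀ p ∈ Acube n, DifferentiableAt ℝ (fun y => Tc f n p y) x := by
        intro p hp
        have hF : Differentiable ℝ (iteratedDeriv (p.1+p.2.1+p.2.2) f) := hdiff _ (hj_le p hp)
        unfold Tc
        fun_prop
      rw [deriv_fun_sum hdA]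
      have hder : ∀ p ∈ Acube n, deriv (fun y => Tc f n p y) x =
          ((n.factorial : ℝ) / (p.1.factorial * p.2.1.factorial * p.2.2.factorial)
              * 3^(p.1+p.2.1) * (2*p.1 : ℕ) * x^(2*p.1+p.2.1-1)
              * iteratedDeriv (p.1+p.2.1+p.2.2) f (x^3)
            + (n.factorial : ℝ) / (p.1.factorial * p.2.1.factorial * p.2.2.factorial)
              * 3^(p.1+p.2.1) * (p.2.1 : ℝ) * x^(2*p.1+p.2.1-1)
              * iteratedDeriv (p.1+p.2.1+p.2.2) f (x^3))
          + (n.factorial : ℝ) / (p.1.factorial * p.2.1.factorial * p.2.2.factorial)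
              * 3^(p.1+p.2.1) * 3 * x^(2*p.1+p.2.1+2)
              * iteratedDeriv (p.1+p.2.1+p.2.2+1) f (x^3) := by
        intro p hp
        have hF : Differentiable ℝ (iteratedDeriv (p.1+p.2.1+p.2.2) f) := hdiff _ (hj_le p hp)
        have hd := deriv_term
          ((n.factorial : ℝ) / (p.1.factorial * p.2.1.factorial * p.2.2.factorial)
            * 3^(p.1+p.2.1)) (2*p.1+p.2.1) (iteratedDeriv (p.1+p.2.1+p.2.2) f) hF x
        simp only [Tc]
        rw [hd, ← iteratedDeriv_succ]
        push_cast
        ring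
      rw [Finset.sum_congr rfl hder, Finset.sum_add_distrib, Finset.sum_add_distrib]
      rw [Finset.sum_congr rfl (Tc_split f n x), Finset.sum_add_distrib,
          Finset.sum_add_distrib, E1, E2, E3]
      ring

theorem iteratedDeriv_comp_cube (n : ℕ) (f : ℝ → ℝ) (hf : ContDiff ℝ n f) (x : ℝ) :
    iteratedDeriv n (fun t => f (t ^ 3)) x =
      (n.factorial : ℝ) * ∑ k ∈ Finset.range (n / 3 + 1),
        ∑ m ∈ Finset.range ((n - 3 * k) / 2 + 1),
          (3 : ℝ) ^ (n - 3 * k - m) * x ^ (2 * n - 6 * k - 3 * m) /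
              (((n - 3 * k - 2 * m).factorial : ℝ) * k.factorial * m.factorial) *
            iteratedDeriv (n - 2 * k - m) f (x ^ 3) := by
  rw [key n f hf x]
  rw [Finset.mul_sum]
  simp_rw [Finset.mul_sum]
  rw [Finset.sum_sigma']
  refine Finset.sum_nbij' (i := fun p => (⟨p.2.2, p.2.1⟩ : Σ _ : ℕ, ℕ))
    (j := fun q => (n - 3*q.1 - 2*q.2, q.2, q.1)) ?_ ?_ ?_ ?_ ?_
  · intro p hp
    obtain ⟨a, b, c⟩ := p
    simp only [mem_Acube] at hp
    simp only [mem_sigma, mem_range]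
    omega
  · intro q hq
    simp only [mem_sigma, mem_range] at hq
    simp only [mem_Acube]
    omega
  · intro p hp
    obtain ⟨a, b, c⟩ := p
    simp only [mem_Acube] at hp
    simp only [Prod.mk.injEq, and_true, true_and]
    omega
  · intro q hq
    rfl
  · intro p hp
    obtain ⟨a, b, c⟩ := p
    simp only [mem_Acube] at hp
    simp only [Tc]
    rw [show n - 3*c - b = a + b by omega,
        show 2*n - 6*c - 3*b = 2*a + b by omega,
        show n - 2*c - b = a + b + c by omega,
        show n - 3*c - 2*b = a by omega]
    ring
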